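/- Let G be a digraph on {1,…,n} and let C ⊆ 𝔽₂ⁿ be a binary linear code of dimension k. Then C is an r-perfect G-code if and only if both of the following hold: (i) |S_G(0;r)| = 2^{n−k}; and (ii) for every nonzero codeword c ∈ C and every way of writing the support of c as a disjoint union of two subsets, with x and y the vectors supported on the two parts (so x + y = c), either w_G(x) ≥ r+1 or w_G(y) ≥ r+1. -/

import Mathlib

open Classical

noncomputable def wtG {V : Type*} [Fintype V] (E : V → V → Prop) (x : V → ZMod 2) : ℕ :=
  (Finset.univ.filter (fun v => ∃ u, x u ≠ 0 ∧ Relation.ReflTransGen E u v)).card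

noncomputable def dG {V : Type*} [Fintype V] (E : V → V → Prop) (x y : V → ZMod 2) : ℕ :=
  wtG E (x - y)

def IsCovering {β : Type*} (d : β → β → ℕ) (C : Set β) (r : ℕ) : Prop :=
  ∀ x, ∃ c ∈ C, d c x ≤ r

def IsPacking {β : Type*} (d : β → β → ℕ) (C : Set β) (r : ℕ) : Prop :=
  ∀ c₁ ∈ C, ∀ c₂ ∈ C, c₁ ≠ c₂ → ∀ x, ¬(d c₁ x ≤ r ∧ d c₂ x ≤ r)

lemma wtG_mono {V : Type*} [Fintype V] (E : V → V → Prop) {x a : V → ZMod 2}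
    (h : ∀ i, x i ≠ 0 → a i ≠ 0) : wtG E x ≤ wtG E a := by
  apply Finset.card_le_card
  intro v hv
  simp only [Finset.mem_filter, Finset.mem_univ, true_and] at *
  obtain ⟨u, hu, hr⟩ := hv
  exact ⟨u, h u hu, hr⟩

lemma wtG_neg {V : Type*} [Fintype V] (E : V → V → Prop) (x : V → ZMod 2) :
    wtG E (-x) = wtG E x := by
  have : -x = x := by funext i; exact CharTwo.neg_eq (x i)
  rw [this]

lemma dG_zero {V : Type*} [Fintype V] (E : V → V → Prop) (y : V → ZMod 2) :
    dG E 0 y = wtG E y := by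
  rw [dG, zero_sub, wtG_neg]

theorem stmt_9 {n k r : ℕ} (E : Fin n → Fin n → Prop) (hirrefl : ∀ v, ¬ E v v)
    (C : Submodule (ZMod 2) (Fin n → ZMod 2))
    (hk : Module.finrank (ZMod 2) C = k) :
    (IsCovering (dG E) (C : Set (Fin n → ZMod 2)) r ∧
        IsPacking (dG E) (C : Set (Fin n → ZMod 2)) r) ↔
      ((Finset.univ.filter (fun y : Fin n → ZMod 2 => dG E 0 y ≤ r)).card = 2 ^ (n - k) ∧
        ∀ c ∈ C, c ≠ 0 → ∀ x y : Fin n → ZMod 2,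
          (∀ i, x i = 0 ∨ y i = 0) → x + y = c →
          r + 1 ≤ wtG E x ∨ r + 1 ≤ wtG E y) := by
  classical
  -- packing ↔ condition (ii)
  have pack_iff : IsPacking (dG E) (C : Set (Fin n → ZMod 2)) r ↔
      (∀ c ∈ C, c ≠ 0 → ∀ x y : Fin n → ZMod 2,
        (∀ i, x i = 0 ∨ y i = 0) → x + y = c →
        r + 1 ≤ wtG E x ∨ r + 1 ≤ wtG E y) := by
    constructor
    · intro hp c hc hc0 x y hdisj hxy
      by_contra h
      push_neg at h
      obtain ⟨hx, hy⟩ := h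
      refine hp c hc 0 C.zero_mem hc0 x ⟨?_, ?_⟩
      · have : c - x = y := by rw [← hxy]; ring
        rw [dG, this]; omega
      · rw [dG, zero_sub, wtG_neg]; omega
    · intro h c₁ h₁ c₂ h₂ hne z hz
      obtain ⟨hz1, hz2⟩ := hz
      set c := c₁ - c₂ with hc
      have hcC : c ∈ C := C.sub_mem h₁ h₂
      have hc0 : c ≠ 0 := sub_ne_zero.mpr hne
      set a := c₁ - z with ha
      set b := z - c₂ with hb
      set x : Fin n → ZMod 2 := fun i => if b i = 0 then c i else 0 with hx
      set y : Fin n → ZMod 2 := fun i => if b i = 0 then 0 else c i with hy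
      have hxa : wtG E x ≤ wtG E a := by
        apply wtG_mono
        intro i hi
        simp only [hx] at hi
        by_cases hbi : b i = 0
        · simp [hbi] at hi
          have : a i = c i - b i := by simp only [ha, hb, hc, Pi.sub_apply]; ring
          rw [this, hbi, sub_zero]; exact hi
        · simp [hbi] at hi
      have hyb : wtG E y ≤ wtG E b := by
        apply wtG_mono
        intro i hi
        simp only [hy] at hi
        by_cases hbi : b i = 0
        · simp [hbi] at hi
        · exact hbi
      have hwa : wtG E a ≤ r := hz1
      have hwb : wtG E b ≤ r := by
        have : c₂ - z = -b := by rw [hb]; ring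
        have h2 := hz2
        rw [dG, this, wtG_neg] at h2
        exact h2
      have hdisj : ∀ i, x i = 0 ∨ y i = 0 := by
        intro i
        by_cases hbi : b i = 0
        · right; simp [hy, hbi]
        · left; simp [hx, hbi]
      have hsum : x + y = c := by
        funext i
        by_cases hbi : b i = 0 <;> simp [hx, hy, hbi]
      rcases h c hcC hc0 x y hdisj hsum with h' | h' <;> omega
  -- counting setup
  set S : (Fin n → ZMod 2) → Finset (Fin n → ZMod 2) :=
    fun c => Finset.univ.filter (fun x => dG E c x ≤ r) with hS
  set Cf : Finset (Fin n → ZMod 2) := Finset.univ.filter (fun x => x ∈ C) with hCf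
  have hmemCf : ∀ x, x ∈ Cf ↔ x ∈ C := by
    intro x; simp [hCf]
  have hCk : Cf.card = 2 ^ k := by
    have h1 : Fintype.card C = 2 ^ k := by
      rw [Module.card_eq_pow_finrank (K := ZMod 2) (V := C), ZMod.card, hk]
    calc Cf.card = Fintype.card {x : Fin n → ZMod 2 // x ∈ C} :=
          (Fintype.card_subtype _).symm
      _ = Fintype.card C := Fintype.card_congr (Equiv.refl _)
      _ = 2 ^ k := h1
  have hScard : ∀ c, (S c).card = (S 0).card := by
    intro c
    apply Finset.card_bij (fun x _ => x - c)
    · intro x hx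
      simp only [hS, Finset.mem_filter, Finset.mem_univ, true_and] at hx ⊢
      have : (0 : Fin n → ZMod 2) - (x - c) = c - x := by ring
      rw [dG, this]
      exact hx
    · intro x hx y hy hxy
      have := congrArg (· + c) hxy
      simpa using this
    · intro y hy
      refine ⟨y + c, ?_, by ring⟩
      simp only [hS, Finset.mem_filter, Finset.mem_univ, true_and] at hy ⊢
      have : c - (y + c) = 0 - y := by ring
      rw [dG, this, ← dG]
      exact hy
  have hkn : k ≤ n := by
    have h1 := Submodule.finrank_le C
    rw [hk] at h1
    have h2 : Module.finrank (ZMod 2) (Fin n → ZMod 2) = n := by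
      rw [Module.finrank_pi, Fintype.card_fin]
    omega
  have hcardfun : Fintype.card (Fin n → ZMod 2) = 2 ^ n := by
    rw [Fintype.card_fun, ZMod.card, Fintype.card_fin]
  have hbiUnion : ∀ _ : IsPacking (dG E) (C : Set (Fin n → ZMod 2)) r,
      (Cf.biUnion S).card = 2 ^ k * (S 0).card := by
    intro hpack
    rw [Finset.card_biUnion, ← hCk]
    · rw [Finset.sum_congr rfl (fun c _ => hScard c), Finset.sum_const, smul_eq_mul]
    · intro c₁ h₁ c₂ h₂ hne
      rw [Function.onFun, Finset.disjoint_left]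
      intro x hx1 hx2
      simp only [hS, Finset.mem_filter, Finset.mem_univ, true_and] at hx1 hx2
      exact hpack c₁ ((hmemCf c₁).mp h₁) c₂ ((hmemCf c₂).mp h₂) hne x ⟨hx1, hx2⟩
  have hcov_iff : IsCovering (dG E) (C : Set (Fin n → ZMod 2)) r ↔
      Cf.biUnion S = Finset.univ := by
    constructor
    · intro hcov
      apply Finset.eq_univ_iff_forall.mpr
      intro x
      obtain ⟨c, hc, hcd⟩ := hcov x
      exact Finset.mem_biUnion.mpr ⟨c, (hmemCf c).mpr hc, by
        simp only [hS, Finset.mem_filter, Finset.mem_univ, true_and]; exact hcd⟩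
    · intro he x
      have hx : x ∈ Cf.biUnion S := he ▸ Finset.mem_univ x
      obtain ⟨c, hc, hxc⟩ := Finset.mem_biUnion.mp hx
      simp only [hS, Finset.mem_filter, Finset.mem_univ, true_and] at hxc
      exact ⟨c, (hmemCf c).mp hc, hxc⟩
  constructor
  · rintro ⟨hcov, hpack⟩
    refine ⟨?_, pack_iff.mp hpack⟩
    have h1 : (Cf.biUnion S).card = 2 ^ n := by
      rw [hcov_iff.mp hcov, Finset.card_univ, hcardfun]
    have h2 := hbiUnion hpack
    have h3 : 2 ^ k * (S 0).card = 2 ^ k * 2 ^ (n - k) := by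
      rw [← h2, h1, ← pow_add]
      congr 1
      omega
    have h4 := Nat.eq_of_mul_eq_mul_left (by positivity : 0 < 2 ^ k) h3
    exact h4
  · rintro ⟨hcount, hii⟩
    have hpack := pack_iff.mpr hii
    refine ⟨?_, hpack⟩
    apply hcov_iff.mpr
    apply Finset.eq_univ_of_card
    rw [hbiUnion hpack]
    have : (S 0).card = 2 ^ (n - k) := hcount
    rw [this, hcardfun, ← pow_add]
    congr 1
    omega
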